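/- Let G be a grid enclosing a finite set D of weighted axis-parallel segments, and let T be a set of combinatorial types (with respect to G) of a pairwise-disjoint family of segments, each containing a grid point. Then the Gaifman graph of the 2-CSP instance whose variables are types in T and whose constraints bind types t, t' whenever P(t) and P(t') are adjacent intervals of grid points on the same grid line, is a disjoint union of paths. -/

import Mathlib

open Finset

def IsRect (R : Set (ℝ × ℝ)) : Prop :=
  ∃ x1 x2 y1 y2 : ℝ, R = Set.Icc x1 x2 ×ˢ Set.Icc y1 y2

def IsSeg (R : Set (ℝ × ℝ)) : Prop :=
  ∃ x1 x2 y1 y2 : ℝ, (x1 = x2 ∨ y1 = y2) ∧ R = Set.Icc x1 x2 ×ˢ Set.Icc y1 y2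

/-- A solution: a subset of `D` of cardinality at most `k` consisting of pairwise disjoint
objects. -/
def IsSolution (D : Finset (Set (ℝ × ℝ))) (k : ℕ) (S : Finset (Set (ℝ × ℝ))) : Prop :=
  S ⊆ D ∧ S.card ≤ k ∧ (↑S : Set (Set (ℝ × ℝ))).Pairwise Disjoint

/-- `optk D ω k` : the maximum total `ω`-weight of a set of at most `k` pairwise disjoint
members of `D`. -/
noncomputable def optk (D : Finset (Set (ℝ × ℝ))) (ω : Set (ℝ × ℝ) → ℝ) (k : ℕ) : ℝ :=
  sSup {w : ℝ | ∃ S : Finset (Set (ℝ × ℝ)), IsSolution D k S ∧ w = ∑ R ∈ S, ω R}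

/-- The grid points of the grid with vertical lines at `x`-coordinates `V` and horizontal
lines at `y`-coordinates `Hl`. -/
def gridPoints (V Hl : Finset ℝ) : Set (ℝ × ℝ) := {p : ℝ × ℝ | p.1 ∈ V ∧ p.2 ∈ Hl}

/-- `a` and `b` are consecutive elements of `V` (with `a < b`). -/
def Consec (V : Finset ℝ) (a b : ℝ) : Prop :=
  a ∈ V ∧ b ∈ V ∧ a < b ∧ ∀ c ∈ V, ¬ (a < c ∧ c < b)

def SameOrConsec (V : Finset ℝ) (a b : ℝ) : Prop :=
  (a = b ∧ a ∈ V) ∨ Consec V a b ∨ Consec V b a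

/-- Two grid points are adjacent: they lie on the same or consecutive vertical lines,
and on the same or consecutive horizontal lines. -/
def AdjPts (V Hl : Finset ℝ) (p q : ℝ × ℝ) : Prop :=
  SameOrConsec V p.1 q.1 ∧ SameOrConsec Hl p.2 q.2

/-- `s` is a nonempty interval of consecutive grid points on a horizontal grid line. -/
def IsHInterval (V Hl : Finset ℝ) (s : Set (ℝ × ℝ)) : Prop :=
  ∃ y ∈ Hl, ∃ a ∈ V, ∃ b ∈ V, a ≤ b ∧
    s = {p : ℝ × ℝ | p.1 ∈ V ∧ a ≤ p.1 ∧ p.1 ≤ b ∧ p.2 = y}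

/-- `s` is a nonempty interval of consecutive grid points on a vertical grid line. -/
def IsVInterval (V Hl : Finset ℝ) (s : Set (ℝ × ℝ)) : Prop :=
  ∃ xx ∈ V, ∃ a ∈ Hl, ∃ b ∈ Hl, a ≤ b ∧
    s = {p : ℝ × ℝ | p.2 ∈ Hl ∧ a ≤ p.2 ∧ p.2 ≤ b ∧ p.1 = xx}

/-- Two intervals of grid points on the same horizontal line are adjacent: disjoint, and
some point of one is the `V`-successor of some point of the other. -/
def HAdjIntervals (V Hl : Finset ℝ) (s s' : Set (ℝ × ℝ)) : Prop :=
  Disjoint s s' ∧ ∃ y ∈ Hl, (∀ p ∈ s, p.2 = y) ∧ (∀ p ∈ s', p.2 = y) ∧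
    ∃ u ∈ s, ∃ v ∈ s', Consec V u.1 v.1 ∨ Consec V v.1 u.1

/-- Two intervals of grid points on the same vertical line are adjacent. -/
def VAdjIntervals (V Hl : Finset ℝ) (s s' : Set (ℝ × ℝ)) : Prop :=
  Disjoint s s' ∧ ∃ xx ∈ V, (∀ p ∈ s, p.1 = xx) ∧ (∀ p ∈ s', p.1 = xx) ∧
    ∃ u ∈ s, ∃ v ∈ s', Consec Hl u.2 v.2 ∨ Consec Hl v.2 u.2

/-- The Gaifman graph of the 2-CSP: variables are the types `t : T` (with orientation
`orient t` and set of grid points `P t`); two types are bound iff their point sets are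
adjacent intervals on the same grid line (of the same orientation). -/
def cspGraph (V Hl : Finset ℝ) {T : Type} (P : T → Set (ℝ × ℝ)) (orient : T → Bool) :
    SimpleGraph T :=
  SimpleGraph.fromRel (fun t t' =>
    (orient t = true ∧ orient t' = true ∧ HAdjIntervals V Hl (P t) (P t')) ∨
    (orient t = false ∧ orient t' = false ∧ VAdjIntervals V Hl (P t) (P t')))

/-! ### Auxiliary machinery -/

open SimpleGraph

/-- relevant ("along the line") coordinate for orientation `o`. -/
def ccc (o : Bool) (p : ℝ × ℝ) : ℝ := cond o p.1 p.2

/-- the other ("which line") coordinate. -/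
def occ (o : Bool) (p : ℝ × ℝ) : ℝ := cond o p.2 p.1

lemma ccc_occ_inj {o : Bool} {p q : ℝ × ℝ} (h1 : ccc o p = ccc o q)
    (h2 : occ o p = occ o q) : p = q := by
  cases o <;> simp only [ccc, occ, cond] at h1 h2
  · exact Prod.ext h2 h1
  · exact Prod.ext h1 h2

lemma consecA {V : Finset ℝ} {a b a' b' u v : ℝ}
    (hb : b ∈ V) (ha' : a' ∈ V) (hab : a ≤ b) (hab' : a' ≤ b')
    (hd : ∀ x ∈ V, a ≤ x → x ≤ b → a' ≤ x → x ≤ b' → False)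
    (hu : a ≤ u) (hub : u ≤ b) (hv : a' ≤ v) (hvb : v ≤ b')
    (hc : Consec V u v) : Consec V b a' := by
  obtain ⟨huV, hvV, huv, hbet⟩ := hc
  have hbv : b < v := by
    by_contra hle
    exact hd v hvV (le_of_lt (lt_of_le_of_lt hu huv)) (le_of_not_gt hle) hv hvb
  have hub' : u = b := by
    rcases lt_or_eq_of_le hub with h | h
    · exact absurd ⟨h, hbv⟩ (hbet b hb)
    · exact h
  have hba' : b < a' := by
    by_contra hle
    exact hd b hb hab le_rfl (le_of_not_gt hle) (le_trans (le_of_lt hbv) hvb)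
  refine ⟨hb, ha', hba', fun c hcV hcc => hbet c hcV ?_⟩
  exact ⟨by rw [hub']; exact hcc.1, lt_of_lt_of_le hcc.2 hv⟩

lemma consecB {V : Finset ℝ} {b x y : ℝ} (h1 : Consec V b x) (h2 : Consec V b y) : x = y := by
  rcases lt_trichotomy x y with h | h | h
  · exact absurd ⟨h1.2.2.1, h⟩ (h2.2.2.2 x h1.2.1)
  · exact h
  · exact absurd ⟨h2.2.2.1, h⟩ (h1.2.2.2 y h2.2.1)

lemma consecB' {V : Finset ℝ} {a x y : ℝ} (h1 : Consec V x a) (h2 : Consec V y a) : x = y := by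
  rcases lt_trichotomy x y with h | h | h
  · exact absurd ⟨h, h2.2.2.1⟩ (h1.2.2.2 y h2.1)
  · exact h
  · exact absurd ⟨h, h1.2.2.1⟩ (h2.2.2.2 x h1.1)

lemma HAdjIntervals_symm {V Hl : Finset ℝ} {s s' : Set (ℝ × ℝ)}
    (h : HAdjIntervals V Hl s s') : HAdjIntervals V Hl s' s := by
  obtain ⟨hd, y, hy, h1, h2, u, hu, v, hv, hc⟩ := h
  exact ⟨hd.symm, y, hy, h2, h1, v, hv, u, hu, hc.symm⟩

lemma VAdjIntervals_symm {V Hl : Finset ℝ} {s s' : Set (ℝ × ℝ)}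
    (h : VAdjIntervals V Hl s s') : VAdjIntervals V Hl s' s := by
  obtain ⟨hd, y, hy, h1, h2, u, hu, v, hv, hc⟩ := h
  exact ⟨hd.symm, y, hy, h2, h1, v, hv, u, hu, hc.symm⟩

/-- `t` is the "left" neighbour of `t'`: they are adjacent in the graph and the interval
of `t` ends just before the interval of `t'` begins (on the relevant coordinate). -/
def Rrel (V Hl : Finset ℝ) {T : Type} (P : T → Set (ℝ × ℝ)) (orient : T → Bool)
    (t t' : T) : Prop :=
  (cspGraph V Hl P orient).Adj t t' ∧ ∃ b a : ℝ,
    Consec (if orient t then V else Hl) b a ∧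
    (∀ p ∈ P t, ccc (orient t) p ≤ b) ∧ (∃ p ∈ P t, ccc (orient t) p = b) ∧
    (∀ q ∈ P t', a ≤ ccc (orient t) q) ∧ (∃ q ∈ P t', ccc (orient t) q = a) ∧
    (∀ p ∈ P t, ∀ q ∈ P t', occ (orient t) p = occ (orient t) q)

lemma adj_orient {V Hl : Finset ℝ} {T : Type} {P : T → Set (ℝ × ℝ)} {orient : T → Bool}
    {t t' : T} (h : (cspGraph V Hl P orient).Adj t t') : orient t = orient t' := by
  rw [cspGraph, SimpleGraph.fromRel_adj] at h
  rcases h.2 with (⟨h1, h2, _⟩ | ⟨h1, h2, _⟩) | (⟨h1, h2, _⟩ | ⟨h1, h2, _⟩) <;> rw [h1, h2]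

lemma adjCases (V Hl : Finset ℝ) {T : Type} (P : T → Set (ℝ × ℝ)) (orient : T → Bool)
    (hint : ∀ t, if orient t then IsHInterval V Hl (P t) else IsVInterval V Hl (P t))
    {t t' : T} (hAdj : (cspGraph V Hl P orient).Adj t t')
    (hrel : (orient t = true ∧ orient t' = true ∧ HAdjIntervals V Hl (P t) (P t')) ∨
      (orient t = false ∧ orient t' = false ∧ VAdjIntervals V Hl (P t) (P t'))) :
    Rrel V Hl P orient t t' ∨ Rrel V Hl P orient t' t := by
  rcases hrel with ⟨hot, hot', hH⟩ | ⟨hot, hot', hV⟩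
  · -- horizontal case
    have h1 : IsHInterval V Hl (P t) := by simpa [hot] using hint t
    have h1' : IsHInterval V Hl (P t') := by simpa [hot'] using hint t'
    obtain ⟨y, hy, a, haV, b, hbV, hab, hs⟩ := h1
    obtain ⟨y', hy', a', haV', b', hbV', hab', hs'⟩ := h1'
    have hmem : ∀ p : ℝ × ℝ, p ∈ P t ↔ p.1 ∈ V ∧ a ≤ p.1 ∧ p.1 ≤ b ∧ p.2 = y := by
      intro p; rw [hs]; exact Iff.rfl
    have hmem' : ∀ p : ℝ × ℝ, p ∈ P t' ↔ p.1 ∈ V ∧ a' ≤ p.1 ∧ p.1 ≤ b' ∧ p.2 = y' := by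
      intro p; rw [hs']; exact Iff.rfl
    obtain ⟨hd, y₀, -, hall, hall', u, hu, v, hv, hcase⟩ := hH
    have hay : ((a, y) : ℝ × ℝ) ∈ P t := (hmem _).mpr ⟨haV, le_rfl, hab, rfl⟩
    have hby : ((b, y) : ℝ × ℝ) ∈ P t := (hmem _).mpr ⟨hbV, hab, le_rfl, rfl⟩
    have ha'y' : ((a', y') : ℝ × ℝ) ∈ P t' := (hmem' _).mpr ⟨haV', le_rfl, hab', rfl⟩
    have hb'y' : ((b', y') : ℝ × ℝ) ∈ P t' := (hmem' _).mpr ⟨hbV', hab', le_rfl, rfl⟩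
    have hyy' : y = y' := (hall _ hay).trans (hall' _ ha'y').symm
    have hdd : ∀ x ∈ V, a ≤ x → x ≤ b → a' ≤ x → x ≤ b' → False := by
      intro x hx hh1 hh2 hh3 hh4
      exact Set.disjoint_left.mp hd ((hmem (x, y)).mpr ⟨hx, hh1, hh2, rfl⟩)
        ((hmem' (x, y)).mpr ⟨hx, hh3, hh4, hyy'⟩)
    obtain ⟨huV, hua, hub, huy⟩ := (hmem u).mp hu
    obtain ⟨hvV, hva, hvb, hvy⟩ := (hmem' v).mp hv
    rcases hcase with hc | hc
    · have hba : Consec V b a' := consecA hbV haV' hab hab' hdd hua hub hva hvb hc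
      left
      refine ⟨hAdj, b, a', ?_, ?_, ⟨(b, y), hby, by simp [hot, ccc]⟩, ?_,
        ⟨(a', y'), ha'y', by simp [hot, ccc]⟩, ?_⟩
      · rw [hot]; simpa using hba
      · intro p hp; rw [hot]; exact ((hmem p).mp hp).2.2.1
      · intro q hq; rw [hot]; exact ((hmem' q).mp hq).2.1
      · intro p hp q hq; rw [hot]
        show p.2 = q.2
        rw [((hmem p).mp hp).2.2.2, ((hmem' q).mp hq).2.2.2, hyy']
    · have hdd' : ∀ x ∈ V, a' ≤ x → x ≤ b' → a ≤ x → x ≤ b → False :=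
        fun x hx hh1 hh2 hh3 hh4 => hdd x hx hh3 hh4 hh1 hh2
      have hba : Consec V b' a := consecA hbV' haV hab' hab hdd' hva hvb hua hub hc
      right
      refine ⟨hAdj.symm, b', a, ?_, ?_, ⟨(b', y'), hb'y', by simp [hot', ccc]⟩, ?_,
        ⟨(a, y), hay, by simp [hot', ccc]⟩, ?_⟩
      · rw [hot']; simpa using hba
      · intro p hp; rw [hot']; exact ((hmem' p).mp hp).2.2.1
      · intro q hq; rw [hot']; exact ((hmem q).mp hq).2.1
      · intro p hp q hq; rw [hot']
        show p.2 = q.2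
        rw [((hmem' p).mp hp).2.2.2, ((hmem q).mp hq).2.2.2, hyy']
  · -- vertical case
    have h1 : IsVInterval V Hl (P t) := by simpa [hot] using hint t
    have h1' : IsVInterval V Hl (P t') := by simpa [hot'] using hint t'
    obtain ⟨y, hy, a, haV, b, hbV, hab, hs⟩ := h1
    obtain ⟨y', hy', a', haV', b', hbV', hab', hs'⟩ := h1'
    have hmem : ∀ p : ℝ × ℝ, p ∈ P t ↔ p.2 ∈ Hl ∧ a ≤ p.2 ∧ p.2 ≤ b ∧ p.1 = y := by
      intro p; rw [hs]; exact Iff.rfl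
    have hmem' : ∀ p : ℝ × ℝ, p ∈ P t' ↔ p.2 ∈ Hl ∧ a' ≤ p.2 ∧ p.2 ≤ b' ∧ p.1 = y' := by
      intro p; rw [hs']; exact Iff.rfl
    obtain ⟨hd, y₀, -, hall, hall', u, hu, v, hv, hcase⟩ := hV
    have hay : ((y, a) : ℝ × ℝ) ∈ P t := (hmem _).mpr ⟨haV, le_rfl, hab, rfl⟩
    have hby : ((y, b) : ℝ × ℝ) ∈ P t := (hmem _).mpr ⟨hbV, hab, le_rfl, rfl⟩
    have ha'y' : ((y', a') : ℝ × ℝ) ∈ P t' := (hmem' _).mpr ⟨haV', le_rfl, hab', rfl⟩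
    have hb'y' : ((y', b') : ℝ × ℝ) ∈ P t' := (hmem' _).mpr ⟨hbV', hab', le_rfl, rfl⟩
    have hyy' : y = y' := (hall _ hay).trans (hall' _ ha'y').symm
    have hdd : ∀ x ∈ Hl, a ≤ x → x ≤ b → a' ≤ x → x ≤ b' → False := by
      intro x hx hh1 hh2 hh3 hh4
      exact Set.disjoint_left.mp hd ((hmem (y, x)).mpr ⟨hx, hh1, hh2, rfl⟩)
        ((hmem' (y, x)).mpr ⟨hx, hh3, hh4, hyy'⟩)
    obtain ⟨huV, hua, hub, huy⟩ := (hmem u).mp hu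
    obtain ⟨hvV, hva, hvb, hvy⟩ := (hmem' v).mp hv
    rcases hcase with hc | hc
    · have hba : Consec Hl b a' := consecA hbV haV' hab hab' hdd hua hub hva hvb hc
      left
      refine ⟨hAdj, b, a', ?_, ?_, ⟨(y, b), hby, by simp [hot, ccc]⟩, ?_,
        ⟨(y', a'), ha'y', by simp [hot, ccc]⟩, ?_⟩
      · rw [hot]; simpa using hba
      · intro p hp; rw [hot]; exact ((hmem p).mp hp).2.2.1
      · intro q hq; rw [hot]; exact ((hmem' q).mp hq).2.1
      · intro p hp q hq; rw [hot]
        show p.1 = q.1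
        rw [((hmem p).mp hp).2.2.2, ((hmem' q).mp hq).2.2.2, hyy']
    · have hdd' : ∀ x ∈ Hl, a' ≤ x → x ≤ b' → a ≤ x → x ≤ b → False :=
        fun x hx hh1 hh2 hh3 hh4 => hdd x hx hh3 hh4 hh1 hh2
      have hba : Consec Hl b' a := consecA hbV' haV hab' hab hdd' hva hvb hua hub hc
      right
      refine ⟨hAdj.symm, b', a, ?_, ?_, ⟨(y', b'), hb'y', by simp [hot', ccc]⟩, ?_,
        ⟨(y, a), hay, by simp [hot', ccc]⟩, ?_⟩
      · rw [hot']; simpa using hba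
      · intro p hp; rw [hot']; exact ((hmem' p).mp hp).2.2.1
      · intro q hq; rw [hot']; exact ((hmem q).mp hq).2.1
      · intro p hp q hq; rw [hot']
        show p.1 = q.1
        rw [((hmem' p).mp hp).2.2.2, ((hmem q).mp hq).2.2.2, hyy']

lemma uniqRight {V Hl : Finset ℝ} {T : Type} {P : T → Set (ℝ × ℝ)} {orient : T → Bool}
    (hdisj : ∀ t t', t ≠ t' → Disjoint (P t) (P t'))
    {t w₁ w₂ : T} (H1 : Rrel V Hl P orient t w₁) (H2 : Rrel V Hl P orient t w₂) :
    w₁ = w₂ := by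
  obtain ⟨h1, b1, a1, hc1, hub1, ⟨p1, hp1, hpb1⟩, hlb1, ⟨q1, hq1, hqa1⟩, ho1⟩ := H1
  obtain ⟨h2, b2, a2, hc2, hub2, ⟨p2, hp2, hpb2⟩, hlb2, ⟨q2, hq2, hqa2⟩, ho2⟩ := H2
  by_contra hne
  have hb : b1 = b2 := le_antisymm (hpb1 ▸ hub2 p1 hp1) (hpb2 ▸ hub1 p2 hp2)
  have ha : a1 = a2 := consecB hc1 (hb ▸ hc2)
  have hcc : ccc (orient t) q1 = ccc (orient t) q2 := by rw [hqa1, hqa2, ha]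
  have hoc : occ (orient t) q1 = occ (orient t) q2 :=
    (ho1 p1 hp1 q1 hq1).symm.trans (ho2 p1 hp1 q2 hq2)
  have hq12 : q1 = q2 := ccc_occ_inj hcc hoc
  exact Set.disjoint_left.mp (hdisj w₁ w₂ hne) hq1 (hq12 ▸ hq2)

lemma uniqLeft {V Hl : Finset ℝ} {T : Type} {P : T → Set (ℝ × ℝ)} {orient : T → Bool}
    (hdisj : ∀ t t', t ≠ t' → Disjoint (P t) (P t'))
    {t w₁ w₂ : T} (H1 : Rrel V Hl P orient w₁ t) (H2 : Rrel V Hl P orient w₂ t) :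
    w₁ = w₂ := by
  obtain ⟨h1, b1, a1, hc1, hub1, ⟨p1, hp1, hpb1⟩, hlb1, ⟨q1, hq1, hqa1⟩, ho1⟩ := H1
  obtain ⟨h2, b2, a2, hc2, hub2, ⟨p2, hp2, hpb2⟩, hlb2, ⟨q2, hq2, hqa2⟩, ho2⟩ := H2
  by_contra hne
  have ho12 : orient w₁ = orient w₂ := (adj_orient h1).trans (adj_orient h2).symm
  rw [← ho12] at hc2 hub2 hpb2 hlb2 hqa2 ho2
  have ha : a1 = a2 := by
    refine le_antisymm (hqa2 ▸ hlb1 q2 hq2) (hqa1 ▸ hlb2 q1 hq1)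
  rw [← ha] at hc2
  have hb : b1 = b2 := consecB' hc1 hc2
  have hcc : ccc (orient w₁) p1 = ccc (orient w₁) p2 := by rw [hpb1, hpb2, hb]
  have hoc : occ (orient w₁) p1 = occ (orient w₁) p2 :=
    (ho1 p1 hp1 q1 hq1).trans (ho2 p2 hp2 q1 hq1).symm
  have hp12 : p1 = p2 := ccc_occ_inj hcc hoc
  exact Set.disjoint_left.mp (hdisj w₁ w₂ hne) hp1 (hp12 ▸ hp2)

/-- the Gaifman graph of the 2-CSP instance is a disjoint union of paths:
every vertex has at most two neighbours and the graph is acyclic. -/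
theorem stmt17 (V Hl : Finset ℝ) (T : Type) (P : T → Set (ℝ × ℝ)) (orient : T → Bool)
    (hne : ∀ t, (P t).Nonempty)
    (hint : ∀ t, if orient t then IsHInterval V Hl (P t) else IsVInterval V Hl (P t))
    (hdisj : ∀ t t', t ≠ t' → Disjoint (P t) (P t')) :
    (∀ t, ∃ u v, ∀ w, (cspGraph V Hl P orient).Adj t w → w = u ∨ w = v) ∧
    (cspGraph V Hl P orient).IsAcyclic := by
  classical
  have hR : ∀ t t', (cspGraph V Hl P orient).Adj t t' →
      Rrel V Hl P orient t t' ∨ Rrel V Hl P orient t' t := by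
    intro t t' h
    have h' := h
    rw [cspGraph, SimpleGraph.fromRel_adj] at h'
    rcases h'.2 with hrel | hrel
    · exact adjCases V Hl P orient hint h hrel
    · exact (adjCases V Hl P orient hint h.symm hrel).symm
  have hmono : ∀ t t', Rrel V Hl P orient t t' →
      ccc (orient t) (hne t).some < ccc (orient t') (hne t').some := by
    rintro t t' ⟨hadj, b, a, hcon, hub, -, hlb, -, -⟩
    have h1 := hub _ (hne t).some_mem
    have h2 := hlb _ (hne t').some_mem
    have h3 : orient t = orient t' := adj_orient hadj
    rw [h3] at h1 h2 ⊢
    exact lt_of_le_of_lt h1 (lt_of_lt_of_le hcon.2.2.1 h2)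
  constructor
  · intro t
    refine ⟨if hr : ∃ w, Rrel V Hl P orient t w then hr.choose else t,
            if hl : ∃ w, Rrel V Hl P orient w t then hl.choose else t, ?_⟩
    intro w hw
    rcases hR t w hw with h | h
    · left
      rw [dif_pos ⟨w, h⟩]
      exact (uniqRight hdisj (Exists.choose_spec (⟨w, h⟩ : ∃ w, Rrel V Hl P orient t w)) h).symm
    · right
      rw [dif_pos ⟨w, h⟩]
      exact (uniqLeft hdisj (Exists.choose_spec (⟨w, h⟩ : ∃ w, Rrel V Hl P orient w t)) h).symm
  · intro v c hc
    obtain ⟨m, hmS, hmax⟩ := Finset.exists_max_image c.support.toFinset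
      (fun x => ccc (orient x) (hne x).some)
      ⟨v, List.mem_toFinset.mpr c.start_mem_support⟩
    rw [List.mem_toFinset] at hmS
    have hmax' : ∀ x ∈ c.support,
        ccc (orient x) (hne x).some ≤ ccc (orient m) (hne m).some :=
      fun x hx => hmax x (List.mem_toFinset.mpr hx)
    have hsub : ∀ x ∈ (c.rotate m hmS).support, x ∈ c.support := by
      intro x hx
      rw [SimpleGraph.Walk.support_eq_cons] at hx
      rcases List.mem_cons.mp hx with rfl | hx
      · exact hmS
      · exact List.mem_of_mem_tail
          (((SimpleGraph.Walk.support_rotate c m hmS).mem_iff).mp hx)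
    have hcyc := hc.rotate hmS
    revert hcyc hsub
    generalize c.rotate m hmS = c₂
    cases c₂ with
    | nil => exact fun _ hcyc => hcyc.ne_nil rfl
    | @cons _ w _ h p =>
      intro hsub hcyc
      have hwS : w ∈ c.support := hsub w (by
        rw [SimpleGraph.Walk.support_cons]
        exact List.mem_cons_of_mem _ p.start_mem_support)
      obtain ⟨w', h₂, q, hrev⟩ : ∃ (w' : T) (h₂ : (cspGraph V Hl P orient).Adj m w')
          (q : (cspGraph V Hl P orient).Walk w' m),
          (SimpleGraph.Walk.cons h p).reverse = SimpleGraph.Walk.cons h₂ q := by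
        cases hrv : (SimpleGraph.Walk.cons h p).reverse with
        | nil =>
          have := SimpleGraph.Walk.length_reverse (SimpleGraph.Walk.cons h p)
          rw [hrv] at this
          simp [SimpleGraph.Walk.length_cons] at this
        | cons h₂ q => exact ⟨_, h₂, q, rfl⟩
      have hw'S : w' ∈ c.support := by
        have hmm : w' ∈ (SimpleGraph.Walk.cons h p).reverse.support := by
          rw [hrev, SimpleGraph.Walk.support_cons]
          exact List.mem_cons_of_mem _ q.start_mem_support
        rw [SimpleGraph.Walk.support_reverse, List.mem_reverse] at hmm
        exact hsub w' hmm
      have hRwm : Rrel V Hl P orient w m := by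
        rcases hR m w h with h' | h'
        · exact absurd (hmono m w h') (not_lt.mpr (hmax' w hwS))
        · exact h'
      have hRw'm : Rrel V Hl P orient w' m := by
        rcases hR m w' h₂ with h' | h'
        · exact absurd (hmono m w' h') (not_lt.mpr (hmax' w' hw'S))
        · exact h'
      have hww : w = w' := uniqLeft hdisj hRwm hRw'm
      subst hww
      have hlen : 2 ≤ p.length := by
        have h3 := hcyc.three_le_length
        rw [SimpleGraph.Walk.length_cons] at h3
        omega
      have hpne : p.edges ≠ [] := by
        intro hnil
        have : p.edges.length = p.length := SimpleGraph.Walk.length_edges p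
        rw [hnil] at this
        simp at this
        omega
      obtain ⟨x, xs, hxx⟩ := List.exists_cons_of_ne_nil
        (show p.edges.reverse ≠ [] by simpa using hpne)
      have heq : s(m, w) :: q.edges = p.edges.reverse ++ [s(m, w)] := by
        have h1 : (SimpleGraph.Walk.cons h p).reverse.edges
            = (SimpleGraph.Walk.cons h p).edges.reverse :=
          SimpleGraph.Walk.edges_reverse _
        rw [hrev, SimpleGraph.Walk.edges_cons, SimpleGraph.Walk.edges_cons,
          List.reverse_cons] at h1
        exact h1
      rw [hxx, List.cons_append] at heq
      have hq : q.edges = xs ++ [s(m, w)] := (List.cons_eq_cons.mp heq).2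
      have hnd : (s(m, w) :: q.edges).Nodup := by
        have hnd0 : ((SimpleGraph.Walk.cons h p).reverse.edges).Nodup := by
          rw [SimpleGraph.Walk.edges_reverse]
          exact List.nodup_reverse.mpr hcyc.isCircuit.isTrail.edges_nodup
        rw [hrev, SimpleGraph.Walk.edges_cons] at hnd0
        exact hnd0
      have hmem2 : s(m, w) ∈ q.edges := by
        rw [hq]
        exact List.mem_append_right _ (List.mem_singleton_self _)
      exact (List.nodup_cons.mp hnd).1 hmem2
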